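/- For n ≥ 2 and 2 ≤ k ≤ 3·n^{n-2} - 1, we have d(n,k) ≥ (n - ⌈(log(k+1) - log 3)/log n⌉ - 1)^2. -/

import Mathlib

/-- `w` is a synchronizing word for the DFA with transition function `δ`. -/
def IsSyncWord {n k : ℕ} (δ : Fin k → Fin n → Fin n) (w : List (Fin k)) : Prop :=
  ∃ qs : Fin n, ∀ q : Fin n, w.foldl (fun s x => δ x s) q = qs

/-- The DFA is basic: distinct symbols act differently and no symbol is the identity. -/
def IsBasic {n k : ℕ} (δ : Fin k → Fin n → Fin n) : Prop :=
  Function.Injective δ ∧ ∀ x : Fin k, δ x ≠ id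

/-- Length of a shortest synchronizing word of the DFA `δ`. -/
noncomputable def shortestSync {n k : ℕ} (δ : Fin k → Fin n → Fin n) : ℕ :=
  sInf {L | ∃ w : List (Fin k), IsSyncWord δ w ∧ w.length = L}

/-- `d(n,k)`: the maximal shortest synchronizing word length over all synchronizing
basic DFAs with `n` states and `k` symbols. -/
noncomputable def dBound (n k : ℕ) : ℕ :=
  sSup {L | ∃ δ : Fin k → Fin n → Fin n,
    IsBasic δ ∧ (∃ w, IsSyncWord δ w) ∧ shortestSync δ = L}



namespace CernyAux

/-- digit `j` of `y` in base `n` -/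
def dig (n y j : ℕ) : ℕ := y / n ^ j % n

lemma dig_lt {n : ℕ} (hn : 0 < n) (y j : ℕ) : dig n y j < n := Nat.mod_lt _ hn

lemma dig_zero (n j : ℕ) : dig n 0 j = 0 := by simp [dig]

lemma dig_inj (n : ℕ) (hn : 0 < n) :
    ∀ m y z, y < n ^ m → z < n ^ m → (∀ j < m, dig n y j = dig n z j) → y = z := by
  intro m
  induction m with
  | zero => intro y z hy hz _; simp at hy hz; omega
  | succ m ih =>
    intro y z hy hz hd
    have h0 : y % n = z % n := by
      have := hd 0 (by omega); simpa [dig] using this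
    have hdiv : y / n = z / n := by
      apply ih
      · rw [pow_succ'] at hy; exact Nat.div_lt_of_lt_mul hy
      · rw [pow_succ'] at hz; exact Nat.div_lt_of_lt_mul hz
      · intro j hj
        have := hd (j + 1) (by omega)
        simpa [dig, Nat.div_div_eq_div_mul, pow_succ, mul_comm] using this
    have hy2 := (Nat.div_add_mod y n).symm
    have hz2 := (Nat.div_add_mod z n).symm
    rw [hy2, hz2, hdiv, h0]

/-- one step of the Černý automaton on `Fin N` (on values), with classifier
`c`: `c = 1` is the cyclic shift `a`, `c = 2` is the merge letter `b` (0 ↦ 1),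
anything else acts as identity. -/
def stepc (N c p : ℕ) : ℕ :=
  if c = 1 then (p + 1) % N else if c = 2 then (if p = 0 then 1 else p) else p

lemma stepc_lt {N : ℕ} (hN : 2 ≤ N) {p : ℕ} (hp : p < N) (c : ℕ) : stepc N c p < N := by
  unfold stepc
  split
  · exact Nat.mod_lt _ (by omega)
  · split
    · split <;> omega
    · omega

section Core

variable {k : ℕ}

/-- classifier of a letter -/
def cOf (x : Fin k) : ℕ := ((x : ℕ) + 1) % 3

/-- final value after running the word on the Černý part -/
def finalv (N : ℕ) (u : List (Fin k)) (p : ℕ) : ℕ :=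
  u.foldl (fun p x => stepc N (cOf x) p) p

/-- number of `b`-moves (letter `b` applied while at state `0`) along the
trajectory starting at `p` -/
def Mc (N : ℕ) : List (Fin k) → ℕ → ℕ
  | [], _ => 0
  | x :: u, p => (if cOf x = 2 ∧ p = 0 then 1 else 0) + Mc N u (stepc N (cOf x) p)

/-- number of `a`-letters -/
def Ac : List (Fin k) → ℕ := List.countP (fun x => cOf x = 1)

/-- number of `b`-letters -/
def Bc : List (Fin k) → ℕ := List.countP (fun x => cOf x = 2)

lemma finalv_nil (N p : ℕ) : finalv (k := k) N [] p = p := rfl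

lemma finalv_cons (N : ℕ) (x : Fin k) (u : List (Fin k)) (p : ℕ) :
    finalv N (x :: u) p = finalv N u (stepc N (cOf x) p) := rfl

lemma finalv_lt {N : ℕ} (hN : 2 ≤ N) (u : List (Fin k)) :
    ∀ p, p < N → finalv N u p < N := by
  induction u with
  | nil => intro p hp; simpa [finalv_nil] using hp
  | cons x u ih =>
    intro p hp
    rw [finalv_cons]
    exact ih _ (stepc_lt hN hp _)

lemma length_ge_Ac_add_Bc (u : List (Fin k)) : Ac u + Bc u ≤ u.length := by
  induction u with
  | nil => simp [Ac, Bc]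
  | cons x u ih =>
    simp only [Ac, Bc, List.countP_cons, List.length_cons] at *
    by_cases h1 : cOf x = 1 <;> by_cases h2 : cOf x = 2 <;> simp [h1, h2] at * <;> omega

/-- position formula: final position ≡ start + #a's + #b-moves (mod N). -/
lemma finalv_zmod {N : ℕ} (hN : 2 ≤ N) (u : List (Fin k)) :
    ∀ p, p < N → ((finalv N u p : ℕ) : ZMod N)
      = (p : ZMod N) + (Ac u : ZMod N) + (Mc N u p : ZMod N) := by
  induction u with
  | nil => intro p hp; simp [finalv_nil, Mc, Ac]
  | cons x u ih =>
    intro p hp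
    rw [finalv_cons]
    have hstep := ih (stepc N (cOf x) p) (stepc_lt hN hp _)
    rw [hstep]
    have hAc : Ac (x :: u) = Ac u + (if cOf x = 1 then 1 else 0) := by
      simp [Ac, List.countP_cons]
    have hMc : Mc N (x :: u) p
        = (if cOf x = 2 ∧ p = 0 then 1 else 0) + Mc N u (stepc N (cOf x) p) := rfl
    rw [hAc, hMc]
    have hcast : ((stepc N (cOf x) p : ℕ) : ZMod N)
        = (p : ZMod N) + (if cOf x = 1 then 1 else 0)
          + (if cOf x = 2 ∧ p = 0 then 1 else 0) := by
      by_cases h1 : cOf x = 1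
      · have hs : stepc N (cOf x) p = (p + 1) % N := by simp [stepc, h1]
        rw [hs, ZMod.natCast_mod, h1]
        simp
      · by_cases h2 : cOf x = 2
        · by_cases hp0 : p = 0
          · have hs : stepc N (cOf x) p = 1 := by simp [stepc, h1, h2, hp0]
            rw [hs]
            simp [h1, h2, hp0]
          · have hs : stepc N (cOf x) p = p := by simp [stepc, h1, h2, hp0]
            rw [hs]
            simp [h1, h2, hp0]
        · have hs : stepc N (cOf x) p = p := by simp [stepc, h1, h2]
          rw [hs]
          simp [h1, h2]
    rw [hcast]
    push_cast
    ring

/-- `b`-letter count dominates `b`-move count. -/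
lemma Bc_ge_Mc (N : ℕ) (u : List (Fin k)) : ∀ p, Mc N u p ≤ Bc u := by
  induction u with
  | nil => intro p; simp [Mc, Bc]
  | cons x u ih =>
    intro p
    have := ih (stepc N (cOf x) p)
    simp only [Mc, Bc, List.countP_cons] at *
    by_cases h2 : cOf x = 2 <;> by_cases hp : p = 0 <;> simp [h2, hp] at * <;> omega

/-- distance to `0` going forward -/
def Dd (N p : ℕ) : ℕ := if p = 0 then 0 else N - p

/-- amortized travel bound: the number of `a`'s is at least `(N-1)(M-1) + D(p)`. -/
lemma Ac_ge {N : ℕ} (hN : 2 ≤ N) (u : List (Fin k)) :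
    ∀ p, p < N → 1 ≤ Mc N u p → (N - 1) * (Mc N u p - 1) + Dd N p ≤ Ac u := by
  induction u with
  | nil => intro p hp hM; simp [Mc] at hM
  | cons x u ih =>
    intro p hp hM
    have hAc : Ac (x :: u) = Ac u + (if cOf x = 1 then 1 else 0) := by
      simp [Ac, List.countP_cons]
    have hMc : Mc N (x :: u) p
        = (if cOf x = 2 ∧ p = 0 then 1 else 0) + Mc N u (stepc N (cOf x) p) := rfl
    by_cases h1 : cOf x = 1
    · -- letter a
      have hs : stepc N (cOf x) p = (p + 1) % N := by simp [stepc, h1]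
      have hic : ¬(cOf x = 2 ∧ p = 0) := by
        rintro ⟨h2, -⟩; omega
      have hMeq : Mc N (x :: u) p = Mc N u ((p + 1) % N) := by
        rw [hMc, hs, if_neg hic, Nat.zero_add]
      have hAce : Ac (x :: u) = Ac u + 1 := by rw [hAc, if_pos h1]
      have hplt : (p + 1) % N < N := Nat.mod_lt _ (by omega)
      rw [hMeq] at hM
      have hih := ih ((p + 1) % N) hplt hM
      have hD : Dd N p ≤ Dd N ((p + 1) % N) + 1 := by
        by_cases hpN : p + 1 = N
        · rw [hpN, Nat.mod_self]
          unfold Dd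
          split_ifs <;> first | contradiction | omega
        · have hlt : (p + 1) % N = p + 1 := Nat.mod_eq_of_lt (by omega)
          rw [hlt]
          unfold Dd
          split_ifs <;> first | contradiction | omega
      rw [hMeq, hAce]
      omega
    · -- not an a: position p changes only on a b-move at 0
      by_cases hbm : cOf x = 2 ∧ p = 0
      · -- b-move
        have hs : stepc N (cOf x) p = 1 := by
          simp [stepc, h1, hbm.1, hbm.2]
        have hM' : Mc N (x :: u) p = 1 + Mc N u 1 := by rw [hMc, hs]; simp [hbm]
        rw [hM'] at hM ⊢
        by_cases hM1 : 1 ≤ Mc N u 1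
        · have hih := ih 1 (by omega) hM1
          have hD1 : Dd N 1 = N - 1 := by simp [Dd]
          rw [hD1] at hih
          have hDp : Dd N p = 0 := by simp [Dd, hbm.2]
          rw [hAc, hDp]
          have hexp : (N - 1) * (1 + Mc N u 1 - 1)
              = (N - 1) * (Mc N u 1 - 1) + (N - 1) := by
            have h3 : 1 + Mc N u 1 - 1 = (Mc N u 1 - 1) + 1 := by omega
            rw [h3, Nat.mul_add, Nat.mul_one]
          omega
        · have : Mc N u 1 = 0 := by omega
          rw [this]
          have hDp : Dd N p = 0 := by simp [Dd, hbm.2]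
          rw [hDp]; simp
      · -- identity action on p
        have hs : stepc N (cOf x) p = p := by
          unfold stepc
          by_cases h2 : cOf x = 2
          · have hp0 : p ≠ 0 := fun h => hbm ⟨h2, h⟩
            simp [h1, h2, hp0]
          · simp [h1, h2]
        have hM' : Mc N (x :: u) p = Mc N u p := by rw [hMc, hs]; simp [hbm]
        rw [hM'] at hM ⊢
        have hih := ih p hp hM
        rw [hAc]
        omega

/-- Core lower bound: a word over a 3-classified alphabet whose Černý action is
constant on `Fin N` values must have length at least `(N-1)^2`. -/
lemma core_length {N : ℕ} (hN : 2 ≤ N) (u : List (Fin k)) (F : ℕ) (hF : F < N)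
    (hsync : ∀ p, p < N → finalv N u p = F) :
    (N - 1) ^ 2 ≤ u.length := by
  haveI : NeZero N := ⟨by omega⟩
  -- choose the starting point p* with M ≡ N-1 (mod N)
  set z : ZMod N := (F : ZMod N) - (Ac u : ZMod N) - ((N - 1 : ℕ) : ZMod N) with hz
  set p : ℕ := z.val with hpdef
  have hp : p < N := ZMod.val_lt z
  have hpz : ((p : ℕ) : ZMod N) = z := by
    have := ZMod.natCast_val (R := ZMod N) z
    rwa [ZMod.cast_id] at this
  have hpos := finalv_zmod hN u p hp
  rw [hsync p hp] at hpos
  -- (Mc : ZMod N) = N-1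
  have hMz : ((Mc N u p : ℕ) : ZMod N) = ((N - 1 : ℕ) : ZMod N) := by
    rw [hpz] at hpos
    rw [hz] at hpos
    linear_combination -hpos
  have hMmod : Mc N u p % N = (N - 1) % N := (ZMod.natCast_eq_natCast_iff _ _ _).mp hMz
  have hNm : (N - 1) % N = N - 1 := Nat.mod_eq_of_lt (by omega)
  have hMge : N - 1 ≤ Mc N u p := by
    have := Nat.mod_le (Mc N u p) N
    omega
  have hM1 : 1 ≤ Mc N u p := by omega
  have hA := Ac_ge hN u p hp hM1
  have hB := Bc_ge_Mc N u p
  have hlen := length_ge_Ac_add_Bc u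
  have hmul : (N - 1) * (N - 2) ≤ (N - 1) * (Mc N u p - 1) :=
    Nat.mul_le_mul_left _ (by omega)
  have hsq : (N - 1) ^ 2 = (N - 1) * (N - 2) + (N - 1) := by
    have h2 : N - 1 = (N - 2) + 1 := by omega
    rw [pow_two]
    nth_rewrite 2 [h2]
    rw [Nat.mul_add, Nat.mul_one]
  omega

end Core
end CernyAux

namespace CernyAux

section Construction

variable (n m k : ℕ)

/-- The extended Černý automaton: states `< n - m` form a Černý automaton,
states `≥ n - m` form a tail; a letter `x` encodes `v = x + 1 = 3y + c` where
`c` selects the Černý action (1 = a, 2 = b, else id) and the digits of `y`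
give rotation offsets on the tail states (for `c = 1` the tail also shifts
down by one). -/
def cernyδ (h : m + 2 ≤ n) : Fin k → Fin n → Fin n := fun x q =>
  if hq : (q : ℕ) < n - m then
    ⟨stepc (n - m) (cOf x) (q : ℕ), by
      have h2 : 2 ≤ n - m := by omega
      have := stepc_lt h2 hq (cOf x)
      omega⟩
  else
    ⟨((q : ℕ) - (if cOf x = 1 then 1 else 0)
        + dig n (((x : ℕ) + 1) / 3) ((q : ℕ) - (n - m))) % n,
      Nat.mod_lt _ (by omega)⟩

variable {n m k}

lemma cernyδ_lo (h : m + 2 ≤ n) (x : Fin k) (q : Fin n) (hq : (q : ℕ) < n - m) :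
    (cernyδ n m k h x q : ℕ) = stepc (n - m) (cOf x) (q : ℕ) := by
  simp [cernyδ, hq]

lemma cernyδ_hi (h : m + 2 ≤ n) (x : Fin k) (q : Fin n) (hq : ¬ (q : ℕ) < n - m) :
    (cernyδ n m k h x q : ℕ)
      = ((q : ℕ) - (if cOf x = 1 then 1 else 0)
          + dig n (((x : ℕ) + 1) / 3) ((q : ℕ) - (n - m))) % n := by
  simp [cernyδ, hq]

lemma cernyδ_foldl (h : m + 2 ≤ n) (u : List (Fin k)) :
    ∀ q : Fin n, (q : ℕ) < n - m →
      ((u.foldl (fun s x => cernyδ n m k h x s) q : Fin n) : ℕ) = finalv (n - m) u (q : ℕ) := by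
  induction u with
  | nil => intro q hq; simp [finalv_nil]
  | cons x u ih =>
    intro q hq
    have h2 : 2 ≤ n - m := by omega
    have hstep : (cernyδ n m k h x q : ℕ) = stepc (n - m) (cOf x) (q : ℕ) :=
      cernyδ_lo h x q hq
    have hlt : (cernyδ n m k h x q : ℕ) < n - m := by
      rw [hstep]; exact stepc_lt h2 hq _
    calc ((u.foldl (fun s x => cernyδ n m k h x s) (cernyδ n m k h x q) : Fin n) : ℕ)
        = finalv (n - m) u ((cernyδ n m k h x q : Fin n) : ℕ) := ih _ hlt
      _ = finalv (n - m) u (stepc (n - m) (cOf x) (q : ℕ)) := by rw [hstep]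
      _ = finalv (n - m) (x :: u) (q : ℕ) := (finalv_cons _ _ _ _).symm

/-- every synchronizing word of the extended automaton is long. -/
lemma cerny_lb (h : m + 2 ≤ n) (w : List (Fin k))
    (hw : IsSyncWord (cernyδ n m k h) w) : (n - m - 1) ^ 2 ≤ w.length := by
  obtain ⟨F, hF⟩ := hw
  have h2 : 2 ≤ n - m := by omega
  have hn0 : (0 : ℕ) < n := by omega
  have hq0 : ((⟨0, hn0⟩ : Fin n) : ℕ) < n - m := by show (0:ℕ) < n - m; omega
  have hFv : (F : ℕ) < n - m := by
    have h1 := cernyδ_foldl h w (⟨0, hn0⟩ : Fin n) hq0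
    rw [hF ⟨0, hn0⟩] at h1
    rw [h1]
    exact finalv_lt h2 w _ hq0
  apply core_length h2 w (F : ℕ) hFv
  intro p hp
  have hpn : p < n := by omega
  have hqp : ((⟨p, hpn⟩ : Fin n) : ℕ) < n - m := hp
  have h1 := cernyδ_foldl h w (⟨p, hpn⟩ : Fin n) hqp
  rw [hF ⟨p, hpn⟩] at h1
  exact h1.symm

lemma mod_window_inj {n b d d' : ℕ} (hd : d < n) (hd' : d' < n)
    (h : (b + d) % n = (b + d') % n) : d = d' := by
  have h1 : d ≡ d' [MOD n] := Nat.ModEq.add_left_cancel' b h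
  have h2 : d % n = d' % n := h1
  rw [Nat.mod_eq_of_lt hd, Nat.mod_eq_of_lt hd'] at h2
  exact h2

lemma stepc_zero {N : ℕ} (hN : 2 ≤ N) (c : ℕ) (hc : c < 3) :
    stepc N c 0 = if c = 0 then 0 else 1 := by
  unfold stepc
  interval_cases c
  · simp
  · simp [Nat.mod_eq_of_lt hN]
  · simp

lemma stepc_last {N : ℕ} (hN : 2 ≤ N) (c : ℕ) (hc : c < 3) :
    stepc N c (N - 1) = if c = 1 then 0 else N - 1 := by
  unfold stepc
  have hN1 : N - 1 + 1 = N := by omega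
  have hN0 : ¬(N - 1 = 0) := by omega
  interval_cases c
  · simp
  · simp [hN1, Nat.mod_self]
  · simp [hN0]

lemma cernyδ_inj (h : m + 2 ≤ n) (hk : k + 1 ≤ 3 * n ^ m) :
    Function.Injective (cernyδ n m k h) := by
  intro x x' hxx
  have h2 : 2 ≤ n - m := by omega
  have hn0 : (0 : ℕ) < n := by omega
  have hn1 : (1 : ℕ) < n := by omega
  have hc3 : cOf x < 3 := Nat.mod_lt _ (by norm_num)
  have hc3' : cOf x' < 3 := Nat.mod_lt _ (by norm_num)
  -- the Černý classifiers agree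
  have hc : cOf x = cOf x' := by
    have hq0 : ((⟨0, hn0⟩ : Fin n) : ℕ) < n - m := by show (0:ℕ) < n - m; omega
    have hln : n - m - 1 < n := by omega
    have hq1 : ((⟨n - m - 1, hln⟩ : Fin n) : ℕ) < n - m := by
      show n - m - 1 < n - m; omega
    have e0 := congrArg Fin.val (congrFun hxx ⟨0, hn0⟩)
    rw [cernyδ_lo h x _ hq0, cernyδ_lo h x' _ hq0] at e0
    have e1 := congrArg Fin.val (congrFun hxx ⟨n - m - 1, hln⟩)
    rw [cernyδ_lo h x _ hq1, cernyδ_lo h x' _ hq1] at e1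
    have hv0 : ((⟨0, hn0⟩ : Fin n) : ℕ) = 0 := rfl
    have hv1 : ((⟨n - m - 1, hln⟩ : Fin n) : ℕ) = n - m - 1 := rfl
    rw [hv0, stepc_zero h2 _ hc3, stepc_zero h2 _ hc3'] at e0
    rw [hv1, stepc_last h2 _ hc3, stepc_last h2 _ hc3'] at e1
    split_ifs at e0 e1 <;> omega
  -- the digits agree
  have hbx : ((x : ℕ) + 1) / 3 < n ^ m := by
    have hxk : (x : ℕ) < k := x.isLt
    omega
  have hbx' : ((x' : ℕ) + 1) / 3 < n ^ m := by
    have hxk : (x' : ℕ) < k := x'.isLt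
    omega
  have hy : ((x : ℕ) + 1) / 3 = ((x' : ℕ) + 1) / 3 := by
    apply dig_inj n (by omega) m _ _ hbx hbx'
    intro j hj
    have hjn : n - m + j < n := by omega
    have hq : ¬ ((⟨n - m + j, hjn⟩ : Fin n) : ℕ) < n - m := by
      show ¬ n - m + j < n - m; omega
    have e := congrArg Fin.val (congrFun hxx ⟨n - m + j, hjn⟩)
    rw [cernyδ_hi h x _ hq, cernyδ_hi h x' _ hq] at e
    rw [hc] at e
    have hjj : ((⟨n - m + j, hjn⟩ : Fin n) : ℕ) - (n - m) = j := by
      show n - m + j - (n - m) = j; omega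
    rw [hjj] at e
    exact mod_window_inj (dig_lt hn0 _ _) (dig_lt hn0 _ _) e
  -- conclude
  have hv : (x : ℕ) = (x' : ℕ) := by
    have c1 : ((x : ℕ) + 1) % 3 = ((x' : ℕ) + 1) % 3 := hc
    omega
  exact Fin.val_injective hv

lemma cernyδ_ne_id (h : m + 2 ≤ n) (hk : k + 1 ≤ 3 * n ^ m) (x : Fin k) :
    cernyδ n m k h x ≠ id := by
  intro heq
  have h2 : 2 ≤ n - m := by omega
  have hn0 : (0 : ℕ) < n := by omega
  by_cases hc : cOf x = 0
  · -- identity on the Černý part: some digit is nonzero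
    have hcc : ((x : ℕ) + 1) % 3 = 0 := hc
    have hy1 : 1 ≤ ((x : ℕ) + 1) / 3 := by omega
    have hym : ((x : ℕ) + 1) / 3 < n ^ m := by
      have hxk : (x : ℕ) < k := x.isLt
      omega
    have hex : ∃ j, j < m ∧ dig n (((x : ℕ) + 1) / 3) j ≠ 0 := by
      by_contra hall
      push_neg at hall
      have hz : ((x : ℕ) + 1) / 3 = 0 := by
        apply dig_inj n (by omega) m _ _ hym (by
          have : 0 < n ^ m := Nat.pow_pos hn0
          omega)
        intro j hj
        rw [dig_zero, hall j hj]
      omega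
    obtain ⟨j, hj, hd⟩ := hex
    have hjn : n - m + j < n := by omega
    have hq : ¬ ((⟨n - m + j, hjn⟩ : Fin n) : ℕ) < n - m := by
      show ¬ n - m + j < n - m; omega
    have e := congrArg Fin.val (congrFun heq ⟨n - m + j, hjn⟩)
    rw [cernyδ_hi h x _ hq] at e
    have hjj : ((⟨n - m + j, hjn⟩ : Fin n) : ℕ) - (n - m) = j := by
      show n - m + j - (n - m) = j; omega
    rw [hjj] at e
    have hc1 : cOf x ≠ 1 := by
      have : cOf x = ((x : ℕ) + 1) % 3 := rfl
      omega
    rw [if_neg hc1] at e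
    have hid : ((id (⟨n - m + j, hjn⟩ : Fin n) : Fin n) : ℕ) = n - m + j := rfl
    rw [hid] at e
    have hval : ((⟨n - m + j, hjn⟩ : Fin n) : ℕ) = n - m + j := rfl
    rw [hval] at e
    set d := dig n (((x : ℕ) + 1) / 3) j with hdd
    have hdn : d < n := dig_lt hn0 _ _
    rcases Nat.lt_or_ge (n - m + j - 0 + d) n with hlt | hge
    · rw [Nat.mod_eq_of_lt hlt] at e
      omega
    · have hme : (n - m + j - 0 + d) % n = n - m + j - 0 + d - n := by
        rw [Nat.mod_eq_sub_mod hge, Nat.mod_eq_of_lt (by omega)]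
      rw [hme] at e
      omega
  · -- acts nontrivially at Černý state 0
    have hq0 : ((⟨0, hn0⟩ : Fin n) : ℕ) < n - m := by show (0:ℕ) < n - m; omega
    have e := congrArg Fin.val (congrFun heq ⟨0, hn0⟩)
    rw [cernyδ_lo h x _ hq0] at e
    have hv0 : ((⟨0, hn0⟩ : Fin n) : ℕ) = 0 := rfl
    have hid : ((id (⟨0, hn0⟩ : Fin n) : Fin n) : ℕ) = 0 := rfl
    rw [hv0, hid] at e
    have hc3 : cOf x < 3 := Nat.mod_lt _ (by norm_num)
    rw [stepc_zero h2 _ hc3] at e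
    split_ifs at e <;> omega

end Construction



section Sync

variable {n m k : ℕ}

/-- letter 0 : Černý `a`, tail shifts down -/
lemma x0_lo (h : m + 2 ≤ n) (hk : 2 ≤ k) (q : Fin n) (hq : (q : ℕ) < n - m) :
    (cernyδ n m k h ⟨0, by omega⟩ q : ℕ) = ((q : ℕ) + 1) % (n - m) := by
  rw [cernyδ_lo h _ _ hq]
  have : cOf (⟨0, by omega⟩ : Fin k) = 1 := rfl
  rw [this]
  rfl

lemma x0_hi (h : m + 2 ≤ n) (hk : 2 ≤ k) (q : Fin n) (hq : ¬ (q : ℕ) < n - m) :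
    (cernyδ n m k h ⟨0, by omega⟩ q : ℕ) = (q : ℕ) - 1 := by
  rw [cernyδ_hi h _ _ hq]
  have h1 : cOf (⟨0, by omega⟩ : Fin k) = 1 := rfl
  rw [h1, if_pos rfl]
  have h2 : ((((⟨0, by omega⟩ : Fin k) : ℕ) + 1) / 3) = 0 := by simp
  rw [h2, dig_zero, Nat.add_zero]
  exact Nat.mod_eq_of_lt (by omega)

lemma x1_lo (h : m + 2 ≤ n) (hk : 2 ≤ k) (q : Fin n) (hq : (q : ℕ) < n - m) :
    (cernyδ n m k h ⟨1, by omega⟩ q : ℕ) = if (q : ℕ) = 0 then 1 else (q : ℕ) := by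
  rw [cernyδ_lo h _ _ hq]
  have : cOf (⟨1, by omega⟩ : Fin k) = 2 := rfl
  rw [this]
  rfl

/-- phase 1: applying `x0` `t` times brings every state with value `< n - m + t`
into the Černý part. -/
lemma phase1 (h : m + 2 ≤ n) (hk : 2 ≤ k) :
    ∀ t, ∀ q : Fin n, (q : ℕ) < (n - m) + t →
      (((List.replicate t (⟨0, by omega⟩ : Fin k)).foldl
        (fun s x => cernyδ n m k h x s) q : Fin n) : ℕ) < n - m := by
  intro t
  induction t with
  | zero => intro q hq; simpa using hq
  | succ t ih =>
    intro q hq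
    rw [List.replicate_succ, List.foldl_cons]
    apply ih
    by_cases hc : (q : ℕ) < n - m
    · have := x0_lo h hk q hc
      rw [this]
      have : ((q : ℕ) + 1) % (n - m) < n - m := Nat.mod_lt _ (by omega)
      omega
    · have := x0_hi h hk q hc
      rw [this]
      omega

/-- running `x0` `t` times inside the Černý part rotates by `t`. -/
lemma a_rep (h : m + 2 ≤ n) (hk : 2 ≤ k) :
    ∀ t, ∀ q : Fin n, (q : ℕ) < n - m →
      (((List.replicate t (⟨0, by omega⟩ : Fin k)).foldl
        (fun s x => cernyδ n m k h x s) q : Fin n) : ℕ) = ((q : ℕ) + t) % (n - m) := by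
  intro t
  induction t with
  | zero => intro q hq; simpa using (Nat.mod_eq_of_lt hq).symm
  | succ t ih =>
    intro q hq
    rw [List.replicate_succ, List.foldl_cons]
    have hs := x0_lo h hk q hq
    have hlt : (cernyδ n m k h ⟨0, by omega⟩ q : ℕ) < n - m := by
      rw [hs]; exact Nat.mod_lt _ (by omega)
    rw [ih _ hlt, hs, Nat.mod_add_mod]
    have : (q : ℕ) + 1 + t = (q : ℕ) + (t + 1) := by omega
    rw [this]

/-- one block `x1 ; x0^(n-m-1)` acts as `max (q-1) 0` on the Černý part. -/
lemma block_act (h : m + 2 ≤ n) (hk : 2 ≤ k) (q : Fin n) (hq : (q : ℕ) < n - m) :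
    ((((⟨1, by omega⟩ : Fin k) :: List.replicate (n - m - 1) (⟨0, by omega⟩ : Fin k)).foldl
        (fun s x => cernyδ n m k h x s) q : Fin n) : ℕ) = (q : ℕ) - 1 := by
  rw [List.foldl_cons]
  have hs := x1_lo h hk q hq
  have hlt : (cernyδ n m k h ⟨1, by omega⟩ q : ℕ) < n - m := by
    rw [hs]; split_ifs <;> omega
  rw [a_rep h hk _ _ hlt, hs]
  by_cases h0 : (q : ℕ) = 0
  · rw [if_pos h0, h0]
    have : 1 + (n - m - 1) = n - m := by omega
    rw [this, Nat.mod_self]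
  · rw [if_neg h0]
    have : (q : ℕ) + (n - m - 1) = ((q : ℕ) - 1) + (n - m) := by omega
    rw [this, Nat.add_mod_right]
    exact Nat.mod_eq_of_lt (by omega)

/-- iterated blocks: concatenation of `s` blocks. -/
def blocks (n m k : ℕ) (hk : 2 ≤ k) : ℕ → List (Fin k)
  | 0 => []
  | s + 1 => ((⟨1, by omega⟩ : Fin k) :: List.replicate (n - m - 1) (⟨0, by omega⟩ : Fin k))
      ++ blocks n m k hk s

lemma blocks_act (h : m + 2 ≤ n) (hk : 2 ≤ k) :
    ∀ s, ∀ q : Fin n, (q : ℕ) < n - m → (q : ℕ) ≤ s →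
      (((blocks n m k hk s).foldl (fun s x => cernyδ n m k h x s) q : Fin n) : ℕ) = 0 := by
  intro s
  induction s with
  | zero => intro q hq hle; simpa [blocks] using hle
  | succ s ih =>
    intro q hq hle
    rw [blocks, List.foldl_append]
    set q' := ((⟨1, by omega⟩ : Fin k) :: List.replicate (n - m - 1)
        (⟨0, by omega⟩ : Fin k)).foldl (fun s x => cernyδ n m k h x s) q with hq'
    have hval : (q' : ℕ) = (q : ℕ) - 1 := block_act h hk q hq
    exact ih q' (by omega) (by omega)

/-- the extended automaton has a synchronizing word. -/
lemma cernyδ_sync (h : m + 2 ≤ n) (hk : 2 ≤ k) :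
    IsSyncWord (cernyδ n m k h)
      (List.replicate m (⟨0, by omega⟩ : Fin k) ++ blocks n m k hk (n - m - 1)) := by
  refine ⟨⟨0, by omega⟩, fun q => ?_⟩
  rw [List.foldl_append]
  set q1 := (List.replicate m (⟨0, by omega⟩ : Fin k)).foldl
      (fun s x => cernyδ n m k h x s) q with hq1
  have hval : (q1 : ℕ) < n - m := by
    apply phase1 h hk m q
    have := q.isLt
    omega
  have hfin := blocks_act h hk (n - m - 1) q1 hval (by omega)
  exact Fin.ext hfin

end Sync

/-- Main construction bound. -/
lemma construction (n m k : ℕ) (h : m + 2 ≤ n) (hk1 : 2 ≤ k)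
    (hk : k + 1 ≤ 3 * n ^ m) : (n - m - 1) ^ 2 ≤ dBound n k := by
  set δ := cernyδ n m k h with hδ
  have hbasic : IsBasic δ := ⟨cernyδ_inj h hk, cernyδ_ne_id h hk⟩
  have hsync := cernyδ_sync h hk1
  have hlow : (n - m - 1) ^ 2 ≤ shortestSync δ := by
    have hne : {L | ∃ w, IsSyncWord δ w ∧ w.length = L}.Nonempty :=
      ⟨(List.replicate m (⟨0, by omega⟩ : Fin k) ++ blocks n m k hk1 (n - m - 1)).length,
        ⟨_, hsync, rfl⟩⟩
    unfold shortestSync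
    apply le_csInf hne
    rintro L ⟨w, hw, rfl⟩
    exact cerny_lb h w hw
  have hmem : shortestSync δ ∈ {L | ∃ δ' : Fin k → Fin n → Fin n,
      IsBasic δ' ∧ (∃ w, IsSyncWord δ' w) ∧ shortestSync δ' = L} :=
    ⟨δ, hbasic, ⟨_, hsync⟩, rfl⟩
  have hbdd : BddAbove {L | ∃ δ' : Fin k → Fin n → Fin n,
      IsBasic δ' ∧ (∃ w, IsSyncWord δ' w) ∧ shortestSync δ' = L} := by
    apply Set.Finite.bddAbove
    apply Set.Finite.subset (Set.finite_range (shortestSync (n := n) (k := k)))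
    rintro L ⟨δ', -, -, hL⟩
    exact ⟨δ', hL⟩
  exact hlow.trans (le_csSup hbdd hmem)

end CernyAux

/-- for n ≥ 2 and 2 ≤ k ≤ 3·n^{n-2} - 1,
`d(n,k) ≥ (n - ⌈(log(k+1) - log 3)/log n⌉ - 1)^2`. -/
theorem dBound_large_alphabet (n k : ℕ) (hn : 2 ≤ n) (hk1 : 2 ≤ k)
    (hk2 : k ≤ 3 * n ^ (n - 2) - 1) :
    (n - ⌈(Real.log (k + 1) - Real.log 3) / Real.log n⌉₊ - 1) ^ 2 ≤ dBound n k := by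
  set r : ℝ := (Real.log (k + 1) - Real.log 3) / Real.log n with hr
  set m : ℕ := ⌈r⌉₊ with hm
  have hn1 : (1 : ℝ) < (n : ℝ) := by exact_mod_cast hn
  have hlogn : 0 < Real.log n := Real.log_pos hn1
  have hk1R : (0 : ℝ) < (k : ℝ) + 1 := by positivity
  have hnm0 : (0 : ℝ) < (n : ℝ) ^ (n - 2 : ℕ) := by positivity
  -- m ≤ n - 2
  have hpow_pos : 0 < n ^ (n - 2) := Nat.pow_pos (by omega)
  have hk2' : k + 1 ≤ 3 * n ^ (n - 2) := by omega
  have hmle : m ≤ n - 2 := by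
    rw [hm]
    apply Nat.ceil_le.mpr
    rw [hr, div_le_iff₀ hlogn]
    have hcast : ((k : ℝ) + 1) ≤ 3 * (n : ℝ) ^ (n - 2 : ℕ) := by
      exact_mod_cast hk2'
    have hlog1 : Real.log ((k : ℝ) + 1) ≤ Real.log (3 * (n : ℝ) ^ (n - 2 : ℕ)) :=
      Real.log_le_log (by positivity) hcast
    rw [Real.log_mul (by norm_num) (by positivity), Real.log_pow] at hlog1
    have hc2 : ((n - 2 : ℕ) : ℝ) = (n : ℝ) - 2 := by
      push_cast [Nat.cast_sub hn]; ring
    rw [hc2] at hlog1 ⊢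
    have h3 : Real.log ((k:ℝ) + 1) = Real.log (k + 1) := by norm_num
    linarith [hlog1]
  -- k + 1 ≤ 3 * n ^ m
  have hkm : k + 1 ≤ 3 * n ^ m := by
    have hle : r ≤ (m : ℝ) := Nat.le_ceil r
    rw [hr, div_le_iff₀ hlogn] at hle
    have hlog2 : Real.log ((k : ℝ) + 1) ≤ Real.log (3 * (n : ℝ) ^ m) := by
      rw [Real.log_mul (by norm_num) (by positivity), Real.log_pow]
      have h3 : Real.log ((k:ℝ) + 1) = Real.log (k + 1) := by norm_num
      linarith
    have := (Real.log_le_log_iff (by positivity) (by positivity)).mp hlog2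
    have hfin : ((k : ℕ) : ℝ) + 1 ≤ ((3 * n ^ m : ℕ) : ℝ) := by push_cast; linarith
    exact_mod_cast hfin
  exact CernyAux.construction n m k (by omega) hk1 hkm
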